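/- arXiv:1504.07783 — 2 statements merged into one kernel-verified Lean document; each statement's English description precedes it below -/
import Mathlib

section
/- The collection 𝒱 ∪ 𝒱_∞ is locally finite: every compact subset of H²×H² meets only finitely many distinct sets belonging to 𝒱 ∪ 𝒱_∞. -/
noncomputable section

open scoped Classical
open MeasureTheory

namespace Hilbert

/-- `k₀ = 2` if `k ≡ 1 (mod 4)` and `k₀ = 1` otherwise. -/
def k0 (k : ℕ) : ℝ := if k % 4 = 1 then 2 else 1

/-- `ω = (1 + √k)/k₀`. -/
def omg (k : ℕ) : ℝ := (1 + Real.sqrt k) / k0 k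

/-- `ω' = (1 - √k)/k₀`, the algebraic conjugate of `ω`. -/
def omg' (k : ℕ) : ℝ := (1 - Real.sqrt k) / k0 k

/-- The ring `R = ℤ[ω]`, realized inside `ℝ × ℝ` via the pair of real embeddings
`α ↦ (α, α')` of `K = ℚ(√k)`. -/
def R (k : ℕ) : Subring (ℝ × ℝ) := Subring.closure {(omg k, omg' k)}

/-- The ambient space `ℝ⁴`, with coordinates `(x₁, x₂, y₁, y₂)`. -/
abbrev Pt : Type := ℝ × ℝ × ℝ × ℝ

def x1 (p : Pt) : ℝ := p.1
def x2 (p : Pt) : ℝ := p.2.1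
def y1 (p : Pt) : ℝ := p.2.2.1
def y2 (p : Pt) : ℝ := p.2.2.2

/-- `H² × H²`, identified with an open subset of `ℝ⁴`. -/
def HH : Set Pt := {p | 0 < y1 p ∧ 0 < y2 p}

/-- The coordinate `s₁`, determined by `x₁ = s₁ + s₂ ω`, `x₂ = s₁ + s₂ ω'`. -/
def s1 (k : ℕ) (p : Pt) : ℝ := (omg' k * x1 p - omg k * x2 p) / (omg' k - omg k)

/-- The coordinate `s₂`. -/
def s2 (k : ℕ) (p : Pt) : ℝ := (x1 p - x2 p) / (omg k - omg' k)

/-- The ratio `r = y₁/y₂`. -/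
def rr (p : Pt) : ℝ := y1 p / y2 p

/-- The height `h = y₁ y₂`. -/
def hh (p : Pt) : ℝ := y1 p * y2 p

/-- `‖cZ+d‖ = ((cx₁+d)² + c²y₁²)((c'x₂+d')² + c'²y₂²)`, where `c = (c, c')`, `d = (d, d')`
are given by their two real embeddings. -/
def HNorm (c d : ℝ × ℝ) (p : Pt) : ℝ :=
  ((c.1 * x1 p + d.1) ^ 2 + c.1 ^ 2 * y1 p ^ 2) *
    ((c.2 * x2 p + d.2) ^ 2 + c.2 ^ 2 * y2 p ^ 2)

/-- `S = {(c,d) ∈ R² : cR + dR = R}`. -/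
def Spairs (k : ℕ) : Set (R k × R k) := {cd | Ideal.span {cd.1, cd.2} = ⊤}

/-- `V_{c,d}^≥ = {Z ∈ H²×H² : ‖cZ+d‖ ≥ 1}`. -/
def Vge (k : ℕ) (cd : R k × R k) : Set Pt :=
  {p ∈ HH | 1 ≤ HNorm (cd.1 : ℝ × ℝ) (cd.2 : ℝ × ℝ) p}

/-- `V_{c,d}^≤ = {Z ∈ H²×H² : ‖cZ+d‖ ≤ 1}`. -/
def Vle (k : ℕ) (cd : R k × R k) : Set Pt :=
  {p ∈ HH | HNorm (cd.1 : ℝ × ℝ) (cd.2 : ℝ × ℝ) p ≤ 1}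

/-- `V_{c,d} = {Z ∈ H²×H² : ‖cZ+d‖ = 1}`. -/
def Veq (k : ℕ) (cd : R k × R k) : Set Pt :=
  {p ∈ HH | HNorm (cd.1 : ℝ × ℝ) (cd.2 : ℝ × ℝ) p = 1}

/-- `F₀ = {Z ∈ H²×H² : ‖cZ+d‖ ≥ 1 for all (c,d) ∈ S}`. -/
def F0 (k : ℕ) : Set Pt :=
  {p ∈ HH | ∀ cd ∈ Spairs k, 1 ≤ HNorm (cd.1 : ℝ × ℝ) (cd.2 : ℝ × ℝ) p}

/-- `F_∞ = {(s₁,s₂,r,h) : |s₁| ≤ 1/2, |s₂| ≤ 1/2, ε₀⁻² ≤ r ≤ ε₀²}`, where `ε` stands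
for the fundamental unit `ε₀`. -/
def FInf (k : ℕ) (ε : ℝ) : Set Pt :=
  {p ∈ HH | |s1 k p| ≤ 1 / 2 ∧ |s2 k p| ≤ 1 / 2 ∧ (ε ^ 2)⁻¹ ≤ rr p ∧ rr p ≤ ε ^ 2}

/-- `F = F_∞ ∩ F₀`. -/
def F (k : ℕ) (ε : ℝ) : Set Pt := FInf k ε ∩ F0 k

/-- `SL₂(R)`. -/
abbrev SL (k : ℕ) := Matrix.SpecialLinearGroup (Fin 2) (R k)

/-- Möbius action on the upper half-plane: image of `x + y i` under `(a b; c d)`. -/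
def moeb (a b c d x y : ℝ) : ℝ × ℝ :=
  (((a * x + b) * (c * x + d) + a * c * y ^ 2) / ((c * x + d) ^ 2 + c ^ 2 * y ^ 2),
    y / ((c * x + d) ^ 2 + c ^ 2 * y ^ 2))

/-- The action of `γ ∈ SL₂(R)` on `H²×H²`: `γ` acts on the first factor through the first
embedding and through the conjugate matrix `γ'` (second embedding) on the second factor.
This descends to the Hilbert modular group `PSL₂(R)`. -/
def act (k : ℕ) (g : SL k) (p : Pt) : Pt :=
  ((moeb (g.1 0 0 : ℝ × ℝ).1 (g.1 0 1 : ℝ × ℝ).1 (g.1 1 0 : ℝ × ℝ).1 (g.1 1 1 : ℝ × ℝ).1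
      (x1 p) (y1 p)).1,
   (moeb (g.1 0 0 : ℝ × ℝ).2 (g.1 0 1 : ℝ × ℝ).2 (g.1 1 0 : ℝ × ℝ).2 (g.1 1 1 : ℝ × ℝ).2
      (x2 p) (y2 p)).1,
   (moeb (g.1 0 0 : ℝ × ℝ).1 (g.1 0 1 : ℝ × ℝ).1 (g.1 1 0 : ℝ × ℝ).1 (g.1 1 1 : ℝ × ℝ).1
      (x1 p) (y1 p)).2,
   (moeb (g.1 0 0 : ℝ × ℝ).2 (g.1 0 1 : ℝ × ℝ).2 (g.1 1 0 : ℝ × ℝ).2 (g.1 1 1 : ℝ × ℝ).2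
      (x2 p) (y2 p)).2)

/-- The pair of real embeddings of a unit of `R`. -/
def unitVal (k : ℕ) (u : (R k)ˣ) : ℝ × ℝ := ((u : R k) : ℝ × ℝ)

/-- `e` is the fundamental unit of `R`: the smallest unit of `R` greater than `1`
(with respect to the first embedding). -/
def IsFundUnit (k : ℕ) (e : (R k)ˣ) : Prop :=
  1 < (unitVal k e).1 ∧
    ∀ v : (R k)ˣ, 1 < (unitVal k v).1 → (unitVal k e).1 ≤ (unitVal k v).1

/-- The real number `ε₀ > 1`, the fundamental unit under the first embedding. -/
def eps (k : ℕ) (e : (R k)ˣ) : ℝ := (unitVal k e).1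


/-- The norm `N(c) = c c'` of an element of `R` (as a real number). -/
def Nm (k : ℕ) (c : R k) : ℝ := ((c : ℝ × ℝ)).1 * ((c : ℝ × ℝ)).2

/-- A subset `C` of `H²×H²` is hyperbolically bounded if it is bounded in the
Euclidean metric and `y₁, y₂ > ε` on `C` for some `ε > 0`. -/
def HypBounded (C : Set Pt) : Prop :=
  C ⊆ HH ∧ Bornology.IsBounded C ∧ ∃ ε > (0 : ℝ), ∀ p ∈ C, ε < y1 p ∧ ε < y2 p

/-- `V_{C,μ} = {(c,d) ∈ R × R : ‖cZ+d‖ ≤ μ for some Z ∈ C}`. -/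
def VCmu (k : ℕ) (C : Set Pt) (μ : ℝ) : Set (R k × R k) :=
  {cd | ∃ p ∈ C, HNorm (cd.1 : ℝ × ℝ) (cd.2 : ℝ × ℝ) p ≤ μ}

/-- The conditions (8) of Theorem `FiniteSides` on a pair `(c,d) ∈ R²`. -/
def SCond (k : ℕ) (ε : ℝ) (cd : R k × R k) : Prop :=
  cd.1 ≠ 0 ∧ Ideal.span {cd.1, cd.2} = ⊤ ∧
    |Nm k cd.1| ≤ 2 * k / (k0 k) ^ 2 ∧
    |((cd.2 : ℝ × ℝ)).1 / ((cd.1 : ℝ × ℝ)).1| <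
      ε * Real.sqrt (2 * k / (Nm k cd.1 ^ 2 * (k0 k) ^ 2) - (k0 k) ^ 2 / (2 * k)) +
        (1 + omg k) / 2 ∧
    |((cd.2 : ℝ × ℝ)).2 / ((cd.1 : ℝ × ℝ)).2| <
      ε * Real.sqrt (2 * k / (Nm k cd.1 ^ 2 * (k0 k) ^ 2) - (k0 k) ^ 2 / (2 * k)) +
        (1 - omg' k) / 2

/-- `S₁` is a set of representatives, up to multiplication by units of `R`, of the pairs
`(c,d) ∈ R²` satisfying the conditions `SCond`. -/
def IsRepSet (k : ℕ) (ε : ℝ) (S1 : Set (R k × R k)) : Prop :=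
  (∀ cd ∈ S1, SCond k ε cd) ∧
    (∀ cd : R k × R k, SCond k ε cd →
      ∃ ab ∈ S1, ∃ u : (R k)ˣ, cd.1 = (u : R k) * ab.1 ∧ cd.2 = (u : R k) * ab.2) ∧
    (∀ ab ∈ S1, ∀ ab' ∈ S1,
      (∃ u : (R k)ˣ, ab'.1 = (u : R k) * ab.1 ∧ ab'.2 = (u : R k) * ab.2) → ab = ab')

/-- The family `𝒱_∞ = {V_i^± : i = 1,2,3}`. -/
def VfamInf (k : ℕ) (ε : ℝ) : Set (Set Pt) :=
  { {p ∈ HH | s1 k p = 1 / 2}, {p ∈ HH | s1 k p = -(1 / 2)},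
    {p ∈ HH | s2 k p = 1 / 2}, {p ∈ HH | s2 k p = -(1 / 2)},
    {p ∈ HH | rr p = ε ^ 2}, {p ∈ HH | rr p = (ε ^ 2)⁻¹} }

/-- The family `𝒱 = {V_{c,d} : (c,d) ∈ S, c ≠ 0}`. -/
def Vfam (k : ℕ) : Set (Set Pt) :=
  {V | ∃ cd ∈ Spairs k, cd.1 ≠ 0 ∧ V = Veq k cd}

/-- The family `𝓜 = {γ(M) : γ ∈ Γ, M ∈ 𝒱 ∪ 𝒱_∞}`. -/
def Mfam (k : ℕ) (ε : ℝ) : Set (Set Pt) :=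
  {M | ∃ g : SL k, ∃ V ∈ Vfam k ∪ VfamInf k ε, M = act k g '' V}

/-- `ω` as an element of `R`. -/
def omR (k : ℕ) : R k := ⟨(omg k, omg' k), Subring.subset_closure rfl⟩

/-- The side-pairing transformations: `γ ≠ 1` (in `PSL₂(R)`) such that `F ∩ γ⁻¹(F)` has
Hausdorff dimension `3`. -/
def SidePairings (k : ℕ) (ε : ℝ) : Set (SL k) :=
  {g | g ≠ 1 ∧ g.1 ≠ -1 ∧ dimH (F k ε ∩ act k g⁻¹ '' F k ε) = 3}


/-! ### Auxiliary lemmas for local finiteness -/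

section LocFinAux

lemma k0_pos (k : ℕ) : 0 < k0 k := by unfold k0; split <;> norm_num

lemma sqrtk_pos {k : ℕ} (hk1 : 1 < k) : 0 < Real.sqrt k := by
  have : (0:ℝ) < k := by exact_mod_cast Nat.lt_of_lt_of_le Nat.zero_lt_one hk1.le
  positivity

lemma omg_sub_pos {k : ℕ} (hk1 : 1 < k) : 0 < omg k - omg' k := by
  have h := sqrtk_pos hk1
  have h0 := k0_pos k
  have heq : omg k - omg' k = 2 * Real.sqrt k / k0 k := by
    unfold omg omg'; ring
  rw [heq]; positivity

/-- the trace of `ω`. -/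
def trc (k : ℕ) : ℤ := if k % 4 = 1 then 1 else 2

/-- the norm of `ω`. -/
def prd (k : ℕ) : ℤ := if k % 4 = 1 then ((1:ℤ) - k) / 4 else 1 - k

lemma trc_eq (k : ℕ) : ((trc k : ℤ) : ℝ) = omg k + omg' k := by
  unfold trc omg omg' k0
  split <;> push_cast <;> ring

lemma prd_eq (k : ℕ) : ((prd k : ℤ) : ℝ) = omg k * omg' k := by
  have hs : Real.sqrt k * Real.sqrt k = k := Real.mul_self_sqrt (by positivity)
  unfold prd omg omg' k0
  split
  · rename_i h
    obtain ⟨m, hm⟩ : (4:ℤ) ∣ (k:ℤ) - 1 := by omega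
    have h1 : ((1:ℤ) - k) / 4 = -m := by omega
    have h2 : ((k:ℝ)) = 4 * m + 1 := by exact_mod_cast (by omega : (k:ℤ) = 4*m+1)
    rw [h1]
    push_cast
    nlinarith [hs]
  · push_cast
    nlinarith [hs]

lemma mem_R_repr {k : ℕ} {x : ℝ × ℝ} (hx : x ∈ R k) :
    ∃ a b : ℤ, x = ((a:ℝ) + b * omg k, (a:ℝ) + b * omg' k) := by
  induction hx using Subring.closure_induction with
  | mem x hx =>
      rw [Set.mem_singleton_iff] at hx
      exact ⟨0, 1, by simp [hx]⟩
  | zero => exact ⟨0, 0, by simp [Prod.ext_iff]⟩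
  | one => exact ⟨1, 0, by simp [Prod.ext_iff]⟩
  | add x y hx hy ihx ihy =>
      obtain ⟨a, b, rfl⟩ := ihx; obtain ⟨c, d, rfl⟩ := ihy
      refine ⟨a + c, b + d, ?_⟩
      simp only [Prod.mk_add_mk, Prod.ext_iff]
      constructor <;> (push_cast; ring)
  | neg x hx ihx =>
      obtain ⟨a, b, rfl⟩ := ihx
      refine ⟨-a, -b, ?_⟩
      simp only [Prod.neg_mk, Prod.ext_iff]
      constructor <;> (push_cast; ring)
  | mul x y hx hy ihx ihy =>
      obtain ⟨a, b, rfl⟩ := ihx; obtain ⟨c, d, rfl⟩ := ihy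
      refine ⟨a * c - b * d * prd k, a * d + b * c + b * d * trc k, ?_⟩
      have ht := trc_eq k
      have hp := prd_eq k
      simp only [Prod.mk_mul_mk, Prod.ext_iff]
      constructor
      · push_cast
        linear_combination ((b:ℝ) * d) * hp - ((b:ℝ) * d * omg k) * ht
      · push_cast
        linear_combination ((b:ℝ) * d) * hp - ((b:ℝ) * d * omg' k) * ht

lemma sqrtk_irrational {k : ℕ} (hk : Squarefree k) (hk1 : 1 < k) :
    Irrational (Real.sqrt k) := by
  rw [irrational_sqrt_natCast_iff]
  rintro ⟨m, hm⟩
  have h1 : IsUnit m := hk m (by rw [hm])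
  rw [Nat.isUnit_iff] at h1
  rw [h1] at hm
  omega

lemma repr_coord_ne_zero {k : ℕ} (hk : Squarefree k) (hk1 : 1 < k) (a b : ℤ)
    (hab : ¬(a = 0 ∧ b = 0)) :
    ((a:ℝ) + b * omg k ≠ 0) ∧ ((a:ℝ) + b * omg' k ≠ 0) := by
  have hirr := sqrtk_irrational hk hk1
  have h0 := k0_pos k
  have hk0 : ∃ q0 : ℚ, ((q0 : ℚ) : ℝ) = k0 k := by
    unfold k0; split
    · exact ⟨2, by norm_num⟩
    · exact ⟨1, by norm_num⟩
  obtain ⟨q0, hq0⟩ := hk0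
  have hq0ne : (q0 : ℝ) ≠ 0 := by rw [hq0]; exact ne_of_gt h0
  have hk0ne : k0 k ≠ 0 := ne_of_gt h0
  have key : ∀ s : ℝ, (s = Real.sqrt k ∨ s = -Real.sqrt k) →
      (a:ℝ) + b * ((1 + s) / k0 k) ≠ 0 := by
    intro s hs h
    by_cases hb : b = 0
    · subst hb
      simp at h
      have ha : a = 0 := by exact_mod_cast h
      exact hab ⟨ha, rfl⟩
    · have hbR : (b:ℝ) ≠ 0 := Int.cast_ne_zero.mpr hb
      have h2 : k0 k * (k0 k)⁻¹ = 1 := mul_inv_cancel₀ hk0ne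
      have hsval : (b:ℝ) * s = -(a:ℝ) * k0 k - b := by
        linear_combination (k0 k) * h - ((b:ℝ) * (1 + s)) * h2
      have hq : ((((-(a:ℚ) * q0 - b) / b : ℚ)):ℝ) = s := by
        push_cast
        rw [hq0, div_eq_iff hbR]
        linarith [hsval]
      rcases hs with rfl | rfl
      · exact hirr ⟨(-(a:ℚ) * q0 - b) / b, hq⟩
      · refine hirr ⟨-((-(a:ℚ) * q0 - b) / b), ?_⟩
        push_cast
        push_cast at hq
        linarith [hq]
  constructor
  · exact key (Real.sqrt k) (Or.inl rfl)
  · intro h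
    apply key (-Real.sqrt k) (Or.inr rfl)
    unfold omg' at h
    rw [show (1 + -Real.sqrt k) = 1 - Real.sqrt k from by ring]
    exact h

lemma nm_intval (k : ℕ) (a b : ℤ) :
    ((a:ℝ) + b * omg k) * ((a:ℝ) + b * omg' k)
      = ((a * a + a * b * trc k + b * b * prd k : ℤ) : ℝ) := by
  have ht := trc_eq k
  have hp := prd_eq k
  push_cast
  linear_combination (-(a:ℝ) * b) * ht + (-(b:ℝ) * b) * hp

/-- every element of `R k` has an integer norm. -/
lemma nm_int {k : ℕ} (c : R k) : ∃ N : ℤ, ((c : ℝ × ℝ)).1 * ((c : ℝ × ℝ)).2 = N := by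
  obtain ⟨a, b, hab⟩ := mem_R_repr c.2
  exact ⟨a * a + a * b * trc k + b * b * prd k, by rw [hab]; exact nm_intval k a b⟩

/-- nonzero elements have nonzero coordinates and norm of absolute value at least 1. -/
lemma nonzero_facts {k : ℕ} (hk : Squarefree k) (hk1 : 1 < k) (c : R k) (hc : c ≠ 0) :
    ((c : ℝ × ℝ)).1 ≠ 0 ∧ ((c : ℝ × ℝ)).2 ≠ 0 ∧ 1 ≤ |((c : ℝ × ℝ)).1 * ((c : ℝ × ℝ)).2| := by
  obtain ⟨a, b, hab⟩ := mem_R_repr c.2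
  have hab' : ¬(a = 0 ∧ b = 0) := by
    rintro ⟨rfl, rfl⟩
    apply hc
    apply Subtype.ext
    rw [hab]
    simp [Prod.ext_iff]
  obtain ⟨h1, h2⟩ := repr_coord_ne_zero hk hk1 a b hab'
  rw [hab]
  refine ⟨h1, h2, ?_⟩
  rw [nm_intval k a b]
  have hN0 : (a * a + a * b * trc k + b * b * prd k : ℤ) ≠ 0 := by
    intro h
    have := nm_intval k a b
    rw [h] at this
    push_cast at this
    exact mul_ne_zero h1 h2 this
  rw [← Int.cast_abs]
  exact_mod_cast Int.one_le_abs (by exact_mod_cast hN0)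

/-- the norm of a unit is `±1`. -/
lemma unit_nm {k : ℕ} (u : (R k)ˣ) :
    |(((u : R k) : ℝ × ℝ)).1 * (((u : R k) : ℝ × ℝ)).2| = 1 := by
  obtain ⟨N, hN⟩ := nm_int (u : R k)
  obtain ⟨M, hM⟩ := nm_int ((u⁻¹ : (R k)ˣ) : R k)
  have huv : ((u : R k) * ((u⁻¹ : (R k)ˣ) : R k) : R k) = 1 := by
    rw [← Units.val_mul, mul_inv_cancel, Units.val_one]
  have hval : (((u : R k) : ℝ × ℝ)) * ((((u⁻¹ : (R k)ˣ) : R k)) : ℝ × ℝ) = 1 := by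
    rw [← Subring.coe_mul, huv, Subring.coe_one]
  have h1 : (((u : R k) : ℝ × ℝ)).1 * ((((u⁻¹ : (R k)ˣ) : R k)) : ℝ × ℝ).1 = 1 := by
    have := congrArg Prod.fst hval; simpa using this
  have h2 : (((u : R k) : ℝ × ℝ)).2 * ((((u⁻¹ : (R k)ˣ) : R k)) : ℝ × ℝ).2 = 1 := by
    have := congrArg Prod.snd hval; simpa using this
  have hNM : (N : ℝ) * M = 1 := by rw [← hN, ← hM]; nlinarith [h1, h2]
  have hNM' : N * M = 1 := by exact_mod_cast hNM
  rcases Int.eq_one_or_neg_one_of_mul_eq_one hNM' with h | h <;>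
    rw [hN] <;> rw [h] <;> norm_num

/-- first embedding as a monoid hom on units. -/
lemma unit_zpow_fst {k : ℕ} (u : (R k)ˣ) (n : ℤ) :
    ((((u ^ n : (R k)ˣ) : R k)) : ℝ × ℝ).1 = ((((u : R k)) : ℝ × ℝ)).1 ^ n := by
  let φ : (R k)ˣ →* ℝˣ := Units.map ((RingHom.fst ℝ ℝ).comp (R k).subtype)
  have h : ∀ v : (R k)ˣ, ((φ v : ℝˣ) : ℝ) = ((((v : R k)) : ℝ × ℝ)).1 := fun v => rfl
  calc ((((u ^ n : (R k)ˣ) : R k)) : ℝ × ℝ).1 = ((φ (u ^ n) : ℝˣ) : ℝ) := (h _).symm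
    _ = (((φ u) ^ n : ℝˣ) : ℝ) := by rw [map_zpow]
    _ = ((φ u : ℝˣ) : ℝ) ^ n := Units.val_zpow_eq_zpow_val _ _
    _ = _ := by rw [h]

lemma unit_zpow_snd {k : ℕ} (u : (R k)ˣ) (n : ℤ) :
    ((((u ^ n : (R k)ˣ) : R k)) : ℝ × ℝ).2 = ((((u : R k)) : ℝ × ℝ)).2 ^ n := by
  let φ : (R k)ˣ →* ℝˣ := Units.map ((RingHom.snd ℝ ℝ).comp (R k).subtype)
  have h : ∀ v : (R k)ˣ, ((φ v : ℝˣ) : ℝ) = ((((v : R k)) : ℝ × ℝ)).2 := fun v => rfl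
  calc ((((u ^ n : (R k)ˣ) : R k)) : ℝ × ℝ).2 = ((φ (u ^ n) : ℝˣ) : ℝ) := (h _).symm
    _ = (((φ u) ^ n : ℝˣ) : ℝ) := by rw [map_zpow]
    _ = ((φ u : ℝˣ) : ℝ) ^ n := Units.val_zpow_eq_zpow_val _ _
    _ = _ := by rw [h]

/-- finiteness of bounded subsets of the lattice `R k`. -/
lemma finite_bounded_R {k : ℕ} (hk1 : 1 < k) (M : ℝ) :
    {x : R k | |((x : ℝ × ℝ)).1| ≤ M ∧ |((x : ℝ × ℝ)).2| ≤ M}.Finite := by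
  set dd := omg k - omg' k with hdd
  have hdp : 0 < dd := omg_sub_pos hk1
  set B : ℝ := 2 * M / dd with hB
  set A : ℝ := M + |B| * |omg k| with hA
  set f : ℤ × ℤ → ℝ × ℝ :=
    fun q => (((q.1 : ℝ) + q.2 * omg k, (q.1 : ℝ) + q.2 * omg' k)) with hf
  set box : Set (ℤ × ℤ) := (Set.Icc ⌈-A⌉ ⌊A⌋) ×ˢ (Set.Icc ⌈-|B|⌉ ⌊|B|⌋) with hbox
  have hboxfin : box.Finite := (Set.finite_Icc _ _).prod (Set.finite_Icc _ _)
  have hTfin : (f '' box).Finite := hboxfin.image f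
  apply Set.Finite.subset (Set.Finite.preimage
    (Set.injOn_of_injective (fun a b hab => Subtype.ext hab)) hTfin)
  intro x hx
  obtain ⟨hx1, hx2⟩ := hx
  obtain ⟨a, b, hab⟩ := mem_R_repr x.2
  have hxv1 : ((x : ℝ × ℝ)).1 = (a:ℝ) + b * omg k := by rw [hab]
  have hxv2 : ((x : ℝ × ℝ)).2 = (a:ℝ) + b * omg' k := by rw [hab]
  have hbd : (b:ℝ) * dd = ((x : ℝ × ℝ)).1 - ((x : ℝ × ℝ)).2 := by
    rw [hxv1, hxv2, hdd]; ring
  have hbabs : |(b:ℝ)| ≤ |B| := by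
    have h1 : |(b:ℝ)| * dd = |(b:ℝ) * dd| := by
      rw [abs_mul, abs_of_pos hdp]
    have h2 : |(b:ℝ) * dd| ≤ 2 * M := by
      rw [hbd]
      calc |((x : ℝ × ℝ)).1 - ((x : ℝ × ℝ)).2| ≤ |((x : ℝ × ℝ)).1| + |((x : ℝ × ℝ)).2| :=
            abs_sub _ _
        _ ≤ 2 * M := by linarith
    have h3 : |(b:ℝ)| ≤ 2 * M / dd := by
      rw [le_div_iff₀ hdp, h1]; exact h2
    calc |(b:ℝ)| ≤ B := h3
      _ ≤ |B| := le_abs_self _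
  have haabs : |(a:ℝ)| ≤ A := by
    have : (a:ℝ) = ((x : ℝ × ℝ)).1 - b * omg k := by rw [hxv1]; ring
    rw [this, hA]
    calc |((x : ℝ × ℝ)).1 - b * omg k| ≤ |((x : ℝ × ℝ)).1| + |(b:ℝ) * omg k| := abs_sub _ _
      _ ≤ M + |B| * |omg k| := by
          rw [abs_mul]
          have := abs_nonneg (omg k)
          nlinarith [hbabs, hx1, abs_nonneg ((x : ℝ × ℝ)).1]
  refine ⟨(a, b), ⟨?_, ?_⟩, ?_⟩
  · constructor
    · rw [Int.ceil_le]; push_cast; linarith [abs_le.mp haabs]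
    · rw [Int.le_floor]; push_cast; linarith [abs_le.mp haabs]
  · constructor
    · rw [Int.ceil_le]; push_cast; linarith [abs_le.mp hbabs]
    · rw [Int.le_floor]; push_cast; linarith [abs_le.mp hbabs]
  · rw [hf]; exact hab.symm

lemma hnorm_scale (u1 u2 c1 c2 d1 d2 : ℝ) (p : Pt) :
    HNorm (u1 * c1, u2 * c2) (u1 * d1, u2 * d2) p
      = (u1 * u2) ^ 2 * HNorm (c1, c2) (d1, d2) p := by
  unfold HNorm; ring

lemma VfamInf_finite (k : ℕ) (ε : ℝ) : (VfamInf k ε).Finite := by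
  unfold VfamInf
  exact Set.Finite.insert _ (Set.Finite.insert _ (Set.Finite.insert _
    (Set.Finite.insert _ (Set.Finite.insert _ (Set.finite_singleton _)))))

end LocFinAux

set_option maxHeartbeats 1600000 in
/-- The collection `𝒱 ∪ 𝒱_∞` is locally finite: every compact subset of
`H²×H²` meets only finitely many distinct sets belonging to `𝒱 ∪ 𝒱_∞`. -/
theorem Vfam_locallyFinite (k : ℕ) (hk : Squarefree k) (hk1 : 1 < k)
    (e : (R k)ˣ) (he : IsFundUnit k e)
    (C : Set Pt) (hC : C ⊆ HH) (hCc : IsCompact C) :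
    {V ∈ Vfam k ∪ VfamInf k (eps k e) | (V ∩ C).Nonempty}.Finite := by
  rcases Set.eq_empty_or_nonempty C with rfl | hCne
  · have hemp : {V ∈ Vfam k ∪ VfamInf k (eps k e) | (V ∩ (∅ : Set Pt)).Nonempty} = ∅ := by
      ext V
      simp only [Set.mem_setOf_eq, Set.inter_empty, Set.not_nonempty_empty, and_false,
        Set.mem_empty_iff_false]
    rw [hemp]; exact Set.finite_empty
  -- coordinate bounds on the compact set C
  obtain ⟨M1, hM1⟩ := hCc.exists_bound_of_continuousOn (continuous_fst.continuousOn)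
  obtain ⟨M2, hM2⟩ :=
    hCc.exists_bound_of_continuousOn ((continuous_fst.comp continuous_snd).continuousOn)
  set M : ℝ := max (max M1 M2) 0 with hMdef
  have hM0 : 0 ≤ M := le_max_right _ _
  have hMx : ∀ p ∈ C, |x1 p| ≤ M ∧ |x2 p| ≤ M := by
    intro p hp
    constructor
    · exact le_trans (by simpa [x1, Real.norm_eq_abs] using hM1 p hp)
        (le_trans (le_max_left _ _) (le_max_left _ _))
    · exact le_trans (by simpa [x2, Real.norm_eq_abs] using hM2 p hp)
        (le_trans (le_max_right _ _) (le_max_left _ _))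
  have hy1cont : Continuous (fun p : Pt => y1 p) :=
    continuous_fst.comp (continuous_snd.comp continuous_snd)
  have hy2cont : Continuous (fun p : Pt => y2 p) :=
    continuous_snd.comp (continuous_snd.comp continuous_snd)
  obtain ⟨p1, hp1C, hp1min⟩ := hCc.exists_isMinOn hCne hy1cont.continuousOn
  obtain ⟨p2, hp2C, hp2min⟩ := hCc.exists_isMinOn hCne hy2cont.continuousOn
  set δ : ℝ := min (y1 p1) (y2 p2) with hδdef
  have hδ0 : 0 < δ := lt_min ((hC hp1C).1) ((hC hp2C).2)
  have hδy : ∀ p ∈ C, δ ≤ y1 p ∧ δ ≤ y2 p := fun p hp =>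
    ⟨le_trans (min_le_left _ _) (hp1min hp), le_trans (min_le_right _ _) (hp2min hp)⟩
  set E : ℝ := eps k e with hEdef
  have hE1 : 1 < E := he.1
  have hE0 : 0 < E := lt_trans one_pos hE1
  set M₀ : ℝ := E + 1 / δ ^ 2 + (E / δ + E * M) + (1 / δ + M / δ ^ 2) + 1 with hM₀def
  set U : Set (R k) := {x | |((x : ℝ × ℝ)).1| ≤ M₀ ∧ |((x : ℝ × ℝ)).2| ≤ M₀} with hUdef
  have hUfin : U.Finite := finite_bounded_R hk1 M₀
  set T : Set (R k × R k) := U ×ˢ U with hTdef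
  have hTfin : T.Finite := hUfin.prod hUfin
  -- a helper about absolute values of integer powers of ±1
  have habs_zpow : ∀ x : ℝ, |x| = 1 → ∀ m : ℤ, |x ^ m| = 1 := by
    intro x hx m
    have hx2 : |x| ^ 2 = 1 := by rw [hx]; norm_num
    have hxx : x * x = 1 := by
      have := sq_abs x
      nlinarith only [hx2, this]
    have hmm : (x ^ m) * (x ^ m) = 1 := by
      rw [← mul_zpow, hxx, one_zpow]
    rcases mul_self_eq_one_iff.mp hmm with h | h <;> rw [h] <;> norm_num
  -- key claim: each V_{c,d} meeting C has a representative with bounded coordinates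
  have claim : ∀ cd : R k × R k, cd.1 ≠ 0 → (Veq k cd ∩ C).Nonempty →
      ∃ cd' ∈ T, Veq k cd = Veq k cd' := by
    rintro ⟨c, d⟩ hc0 ⟨p, hpV, hpC⟩
    obtain ⟨hpHH, hpN⟩ := hpV
    obtain ⟨hc1, hc2, hNge⟩ := nonzero_facts hk hk1 c hc0
    obtain ⟨hx1M, hx2M⟩ := hMx p hpC
    obtain ⟨hy1δ, hy2δ⟩ := hδy p hpC
    set c1 : ℝ := ((c : ℝ × ℝ)).1 with hc1def
    set c2 : ℝ := ((c : ℝ × ℝ)).2 with hc2def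
    set d1 : ℝ := ((d : ℝ × ℝ)).1 with hd1def
    set d2 : ℝ := ((d : ℝ × ℝ)).2 with hd2def
    have hpN' : ((c1 * x1 p + d1) ^ 2 + c1 ^ 2 * (y1 p) ^ 2) *
        ((c2 * x2 p + d2) ^ 2 + c2 ^ 2 * (y2 p) ^ 2) = 1 := hpN
    -- bound on the norm of c
    have hyy1 : δ ^ 2 ≤ (y1 p) ^ 2 := by nlinarith only [hy1δ, hδ0]
    have hyy2 : δ ^ 2 ≤ (y2 p) ^ 2 := by nlinarith only [hy2δ, hδ0]
    have hA1 : c1 ^ 2 * δ ^ 2 ≤ (c1 * x1 p + d1) ^ 2 + c1 ^ 2 * (y1 p) ^ 2 := by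
      linarith only [sq_nonneg (c1 * x1 p + d1), mul_le_mul_of_nonneg_left hyy1 (sq_nonneg c1)]
    have hB1 : c2 ^ 2 * δ ^ 2 ≤ (c2 * x2 p + d2) ^ 2 + c2 ^ 2 * (y2 p) ^ 2 := by
      linarith only [sq_nonneg (c2 * x2 p + d2), mul_le_mul_of_nonneg_left hyy2 (sq_nonneg c2)]
    have hc1sq : 0 < c1 ^ 2 := lt_of_le_of_ne (sq_nonneg c1) (Ne.symm (pow_ne_zero 2 hc1))
    have hc2sq : 0 < c2 ^ 2 := lt_of_le_of_ne (sq_nonneg c2) (Ne.symm (pow_ne_zero 2 hc2))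
    have hApos : 0 < (c1 * x1 p + d1) ^ 2 + c1 ^ 2 * (y1 p) ^ 2 :=
      lt_of_lt_of_le (mul_pos hc1sq (pow_pos hδ0 2)) hA1
    have hBpos : 0 < (c2 * x2 p + d2) ^ 2 + c2 ^ 2 * (y2 p) ^ 2 :=
      lt_of_lt_of_le (mul_pos hc2sq (pow_pos hδ0 2)) hB1
    have hABle : (c1 ^ 2 * δ ^ 2) * (c2 ^ 2 * δ ^ 2) ≤ 1 := by
      calc (c1 ^ 2 * δ ^ 2) * (c2 ^ 2 * δ ^ 2)
          ≤ ((c1 * x1 p + d1) ^ 2 + c1 ^ 2 * (y1 p) ^ 2) *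
            ((c2 * x2 p + d2) ^ 2 + c2 ^ 2 * (y2 p) ^ 2) :=
            mul_le_mul hA1 hB1 (by positivity) hApos.le
        _ = 1 := hpN'
    have hNsq : (|c1 * c2| * δ ^ 2) ^ 2 ≤ 1 := by
      have : (|c1 * c2| * δ ^ 2) ^ 2 = (c1 ^ 2 * δ ^ 2) * (c2 ^ 2 * δ ^ 2) := by
        rw [mul_pow, sq_abs]; ring
      rw [this]
      exact hABle
    have hNδ : |c1 * c2| * δ ^ 2 ≤ 1 := by
      nlinarith only [hNsq, mul_nonneg (abs_nonneg (c1 * c2)) (sq_nonneg δ)]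
    have hNle2 : |c1 * c2| ≤ 1 / δ ^ 2 := (le_div_iff₀ (by positivity)).mpr hNδ
    -- choose the balancing power of the fundamental unit
    obtain ⟨n, hn1, hn2⟩ := exists_mem_Ico_zpow (abs_pos.mpr hc1) hE1
    set u : (R k)ˣ := e ^ (-n) with hudef
    set u1 : ℝ := (((u : R k)) : ℝ × ℝ).1 with hu1def
    set u2 : ℝ := (((u : R k)) : ℝ × ℝ).2 with hu2def
    have hu1val : u1 = E ^ (-n) := by
      rw [hu1def, hudef]
      exact unit_zpow_fst e (-n)
    have hu2val : u2 = ((((e : R k)) : ℝ × ℝ)).2 ^ (-n) := by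
      rw [hu2def, hudef]
      exact unit_zpow_snd e (-n)
    have he12 : |((((e : R k)) : ℝ × ℝ)).1 * ((((e : R k)) : ℝ × ℝ)).2| = 1 := unit_nm e
    have huabs : |u1 * u2| = 1 := by
      rw [hu1val, hu2val, hEdef]
      show |(unitVal k e).1 ^ (-n) * _ ^ (-n)| = 1
      rw [← mul_zpow]
      exact habs_zpow _ he12 (-n)
    have hu12sq : (u1 * u2) ^ 2 = 1 := by
      rw [← sq_abs, huabs]; norm_num
    have hEn : (0:ℝ) < E ^ n := zpow_pos hE0 n
    have hu1pos : 0 < u1 := by rw [hu1val]; exact zpow_pos hE0 (-n)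
    have hu1abs : |u1| = (E ^ n)⁻¹ := by
      rw [abs_of_pos hu1pos, hu1val, zpow_neg]
    -- the new representative
    set c' : R k := (u : R k) * c with hc'def
    set d' : R k := (u : R k) * d with hd'def
    have hc'1 : ((c' : ℝ × ℝ)).1 = u1 * c1 := by
      show (((u : R k) * c : R k) : ℝ × ℝ).1 = u1 * c1
      rw [Subring.coe_mul]; rfl
    have hc'2 : ((c' : ℝ × ℝ)).2 = u2 * c2 := by
      show (((u : R k) * c : R k) : ℝ × ℝ).2 = u2 * c2
      rw [Subring.coe_mul]; rfl
    have hd'1 : ((d' : ℝ × ℝ)).1 = u1 * d1 := by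
      show (((u : R k) * d : R k) : ℝ × ℝ).1 = u1 * d1
      rw [Subring.coe_mul]; rfl
    have hd'2 : ((d' : ℝ × ℝ)).2 = u2 * d2 := by
      show (((u : R k) * d : R k) : ℝ × ℝ).2 = u2 * d2
      rw [Subring.coe_mul]; rfl
    -- the norm condition is preserved
    have hscale : ∀ q : Pt, HNorm ((c' : ℝ × ℝ)) ((d' : ℝ × ℝ)) q
        = HNorm ((c : ℝ × ℝ)) ((d : ℝ × ℝ)) q := by
      intro q
      unfold HNorm
      rw [hc'1, hc'2, hd'1, hd'2]
      have expand : ((u1 * c1 * x1 q + u1 * d1) ^ 2 + (u1 * c1) ^ 2 * (y1 q) ^ 2) *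
          ((u2 * c2 * x2 q + u2 * d2) ^ 2 + (u2 * c2) ^ 2 * (y2 q) ^ 2)
          = (u1 * u2) ^ 2 * (((c1 * x1 q + d1) ^ 2 + c1 ^ 2 * (y1 q) ^ 2) *
            ((c2 * x2 q + d2) ^ 2 + c2 ^ 2 * (y2 q) ^ 2)) := by ring
      rw [expand, hu12sq, one_mul]
    have hVeq : Veq k (c, d) = Veq k (c', d') := by
      unfold Veq
      ext q
      simp only [Set.mem_setOf_eq]
      rw [hscale q]
    -- bounds on the new representative
    have hc1'lb : 1 ≤ |u1 * c1| := by
      rw [abs_mul, hu1abs]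
      linarith only [mul_le_mul_of_nonneg_left hn1 (inv_nonneg.mpr hEn.le),
        inv_mul_cancel₀ (ne_of_gt hEn)]
    have hc1'ub : |u1 * c1| ≤ E := by
      rw [abs_mul, hu1abs]
      have hEn1 : E ^ (n + 1) = E ^ n * E := by
        rw [zpow_add_one₀ (ne_of_gt hE0)]
      rw [hEn1] at hn2
      have hkey : (E ^ n)⁻¹ * (E ^ n * E) = E := by
        field_simp
      linarith only [mul_le_mul_of_nonneg_left hn2.le (inv_nonneg.mpr hEn.le), hkey]
    have hprod' : |u1 * c1| * |u2 * c2| = |c1 * c2| := by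
      rw [← abs_mul, show (u1 * c1) * (u2 * c2) = (u1 * u2) * (c1 * c2) by ring,
        abs_mul, huabs, one_mul]
    have hc2'ub : |u2 * c2| ≤ 1 / δ ^ 2 := by
      nlinarith only [hprod', hc1'lb, abs_nonneg (u2 * c2), hNle2]
    have hc2'lb : 1 ≤ E * |u2 * c2| := by
      nlinarith only [hprod', hc1'ub, abs_nonneg (u2 * c2), hNge, abs_nonneg (u1 * c1)]
    -- norm equation at p for the new representative
    have hA'B' : ((u1 * c1 * x1 p + u1 * d1) ^ 2 + (u1 * c1) ^ 2 * (y1 p) ^ 2) *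
        ((u2 * c2 * x2 p + u2 * d2) ^ 2 + (u2 * c2) ^ 2 * (y2 p) ^ 2) = 1 := by
      calc ((u1 * c1 * x1 p + u1 * d1) ^ 2 + (u1 * c1) ^ 2 * (y1 p) ^ 2) *
          ((u2 * c2 * x2 p + u2 * d2) ^ 2 + (u2 * c2) ^ 2 * (y2 p) ^ 2)
          = (u1 * u2) ^ 2 * (((c1 * x1 p + d1) ^ 2 + c1 ^ 2 * (y1 p) ^ 2) *
            ((c2 * x2 p + d2) ^ 2 + c2 ^ 2 * (y2 p) ^ 2)) := by ring
        _ = 1 := by rw [hpN', hu12sq, mul_one]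
    have hA'1 : (u1 * c1) ^ 2 * δ ^ 2 ≤
        (u1 * c1 * x1 p + u1 * d1) ^ 2 + (u1 * c1) ^ 2 * (y1 p) ^ 2 := by
      linarith only [sq_nonneg (u1 * c1 * x1 p + u1 * d1),
        mul_le_mul_of_nonneg_left hyy1 (sq_nonneg (u1 * c1))]
    have hB'1 : (u2 * c2) ^ 2 * δ ^ 2 ≤
        (u2 * c2 * x2 p + u2 * d2) ^ 2 + (u2 * c2) ^ 2 * (y2 p) ^ 2 := by
      linarith only [sq_nonneg (u2 * c2 * x2 p + u2 * d2),
        mul_le_mul_of_nonneg_left hyy2 (sq_nonneg (u2 * c2))]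
    have h1c : 1 ≤ (u1 * c1) ^ 2 := by
      nlinarith only [hc1'lb, abs_nonneg (u1 * c1), sq_abs (u1 * c1)]
    have h1E : 1 ≤ E ^ 2 * (u2 * c2) ^ 2 := by
      nlinarith only [hc2'lb, abs_nonneg (u2 * c2), sq_abs (u2 * c2)]
    have hu2ne : u2 ≠ 0 := by
      intro h
      rw [h, mul_zero, abs_zero] at huabs
      norm_num at huabs
    have hu2c2sq : 0 < (u2 * c2) ^ 2 :=
      lt_of_le_of_ne (sq_nonneg _) (Ne.symm (pow_ne_zero 2 (mul_ne_zero hu2ne hc2)))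
    have hu1c1sq : 0 < (u1 * c1) ^ 2 := lt_of_lt_of_le one_pos h1c
    have hA'pos : 0 < (u1 * c1 * x1 p + u1 * d1) ^ 2 + (u1 * c1) ^ 2 * (y1 p) ^ 2 :=
      lt_of_lt_of_le (mul_pos hu1c1sq (pow_pos hδ0 2)) hA'1
    have hB'pos : 0 < (u2 * c2 * x2 p + u2 * d2) ^ 2 + (u2 * c2) ^ 2 * (y2 p) ^ 2 :=
      lt_of_lt_of_le (mul_pos hu2c2sq (pow_pos hδ0 2)) hB'1
    -- bound for d'_1
    have hEB : δ ^ 2 ≤ E ^ 2 * ((u2 * c2 * x2 p + u2 * d2) ^ 2 + (u2 * c2) ^ 2 * (y2 p) ^ 2) := by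
      linarith only [mul_le_mul_of_nonneg_left hB'1 (sq_nonneg E),
        mul_le_mul_of_nonneg_left h1E (sq_nonneg δ)]
    have hA'δ : ((u1 * c1 * x1 p + u1 * d1) ^ 2 + (u1 * c1) ^ 2 * (y1 p) ^ 2) * δ ^ 2
        ≤ E ^ 2 := by
      have hABE : E ^ 2 * (((u1 * c1 * x1 p + u1 * d1) ^ 2 + (u1 * c1) ^ 2 * (y1 p) ^ 2) *
          ((u2 * c2 * x2 p + u2 * d2) ^ 2 + (u2 * c2) ^ 2 * (y2 p) ^ 2)) = E ^ 2 := by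
        rw [hA'B', mul_one]
      linarith only [mul_le_mul_of_nonneg_left hEB hA'pos.le, hABE]
    have ht1 : (u1 * c1 * x1 p + u1 * d1) ^ 2 ≤
        (u1 * c1 * x1 p + u1 * d1) ^ 2 + (u1 * c1) ^ 2 * (y1 p) ^ 2 := by
      linarith only [sq_nonneg (u1 * c1 * (y1 p))]
    have habs1 : |u1 * c1 * x1 p + u1 * d1| ≤ E / δ := by
      apply abs_le_of_sq_le_sq _ (by positivity)
      have hEδ : (E / δ) ^ 2 = E ^ 2 / δ ^ 2 := by ring
      rw [hEδ, le_div_iff₀ (by positivity : (0:ℝ) < δ ^ 2)]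
      linarith only [mul_le_mul_of_nonneg_right ht1 (sq_nonneg δ), hA'δ]
    have hd1'bd : |u1 * d1| ≤ E / δ + E * M := by
      have hrw : u1 * d1 = (u1 * c1 * x1 p + u1 * d1) - u1 * c1 * x1 p := by ring
      have h5 : |u1 * d1| ≤ |u1 * c1 * x1 p + u1 * d1| + |u1 * c1 * x1 p| := by
        conv_lhs => rw [hrw]
        exact abs_sub _ _
      have h6 : |u1 * c1 * x1 p| ≤ E * M := by
        rw [abs_mul]
        exact mul_le_mul hc1'ub hx1M (abs_nonneg _) hE0.le
      linarith only [h5, h6, habs1]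
    -- bound for d'_2
    have hB'δ : ((u2 * c2 * x2 p + u2 * d2) ^ 2 + (u2 * c2) ^ 2 * (y2 p) ^ 2) * δ ^ 2
        ≤ 1 := by
      have hAlb : δ ^ 2 ≤ (u1 * c1 * x1 p + u1 * d1) ^ 2 + (u1 * c1) ^ 2 * (y1 p) ^ 2 := by
        linarith only [hA'1, mul_le_mul_of_nonneg_right h1c (sq_nonneg δ)]
      linarith only [mul_le_mul_of_nonneg_left hAlb hB'pos.le, hA'B']
    have ht2 : (u2 * c2 * x2 p + u2 * d2) ^ 2 ≤
        (u2 * c2 * x2 p + u2 * d2) ^ 2 + (u2 * c2) ^ 2 * (y2 p) ^ 2 := by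
      linarith only [sq_nonneg (u2 * c2 * (y2 p))]
    have habs2 : |u2 * c2 * x2 p + u2 * d2| ≤ 1 / δ := by
      apply abs_le_of_sq_le_sq _ (by positivity)
      have h1δ : ((1:ℝ) / δ) ^ 2 = 1 / δ ^ 2 := by ring
      rw [h1δ, le_div_iff₀ (by positivity : (0:ℝ) < δ ^ 2)]
      linarith only [mul_le_mul_of_nonneg_right ht2 (sq_nonneg δ), hB'δ]
    have hd2'bd : |u2 * d2| ≤ 1 / δ + M / δ ^ 2 := by
      have hrw : u2 * d2 = (u2 * c2 * x2 p + u2 * d2) - u2 * c2 * x2 p := by ring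
      have h5 : |u2 * d2| ≤ |u2 * c2 * x2 p + u2 * d2| + |u2 * c2 * x2 p| := by
        conv_lhs => rw [hrw]
        exact abs_sub _ _
      have h6 : |u2 * c2 * x2 p| ≤ (1 / δ ^ 2) * M := by
        rw [abs_mul]
        exact mul_le_mul hc2'ub hx2M (abs_nonneg _) (by positivity)
      have h7 : (1 / δ ^ 2) * M = M / δ ^ 2 := by ring
      linarith only [h5, h6, h7, habs2]
    -- nonnegativity of all terms of M₀
    have ht01 : (0:ℝ) ≤ 1 / δ ^ 2 := by positivity
    have ht02 : (0:ℝ) ≤ E / δ := by positivity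
    have ht03 : (0:ℝ) ≤ E * M := by positivity
    have ht04 : (0:ℝ) ≤ 1 / δ := by positivity
    have ht05 : (0:ℝ) ≤ M / δ ^ 2 := by positivity
    refine ⟨(c', d'), ⟨⟨?_, ?_⟩, ?_, ?_⟩, hVeq⟩
    · rw [hc'1]; rw [hM₀def]; linarith [hc1'ub]
    · rw [hc'2]; rw [hM₀def]; linarith [hc2'ub]
    · rw [hd'1]; rw [hM₀def]; linarith [hd1'bd]
    · rw [hd'2]; rw [hM₀def]; linarith [hd2'bd]
  -- conclusion
  have hmain : {V ∈ Vfam k ∪ VfamInf k E | (V ∩ C).Nonempty}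
      ⊆ ((fun cd => Veq k cd) '' T) ∪ VfamInf k E := by
    rintro V ⟨hV | hV, hne⟩
    · obtain ⟨cd, hcdS, hcd0, rfl⟩ := hV
      obtain ⟨cd', hcd'T, heq⟩ := claim cd hcd0 hne
      exact Or.inl ⟨cd', hcd'T, heq.symm⟩
    · exact Or.inr hV
  exact Set.Finite.subset ((hTfin.image _).union (VfamInf_finite k E)) hmain

end Hilbert
end
end

section
/- If γ = (a b; c d) ∈ Γ with c ≠ 0, then F ⊆ V_{c,d}^≥ and γ⁻¹(F) ⊆ V_{c,d}^≤; consequently F ∩ γ⁻¹(F) ⊆ V_{c,d}. -/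
noncomputable section

open scoped Classical
open MeasureTheory

namespace Hilbert

/-- Positivity of the denominator in the Möbius action. -/
lemma D_pos (a b c d x y : ℝ) (h : a * d - b * c = 1) (hy : 0 < y) :
    0 < ((-c) * x + a) ^ 2 + (-c) ^ 2 * y ^ 2 := by
  rcases eq_or_ne c 0 with hc | hc
  · have ha : a ≠ 0 := by rintro rfl; rw [hc] at h; simp at h
    subst hc
    have hE : ((-(0:ℝ)) * x + a) ^ 2 + (-(0:ℝ)) ^ 2 * y ^ 2 = a ^ 2 := by ring
    rw [hE]
    exact pow_two_pos_of_ne_zero ha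
  · have h2 : 0 < (-c) ^ 2 * y ^ 2 :=
      mul_pos (pow_two_pos_of_ne_zero (neg_ne_zero.mpr hc)) (pow_pos hy 2)
    nlinarith [sq_nonneg ((-c) * x + a)]

/-- Key identity for the Möbius action of the inverse matrix. -/
lemma moeb_key (a b c d x y : ℝ) (h : a * d - b * c = 1)
    (hD : 0 < ((-c) * x + a) ^ 2 + (-c) ^ 2 * y ^ 2) :
    (c * (moeb d (-b) (-c) a x y).1 + d) ^ 2 + c ^ 2 * (moeb d (-b) (-c) a x y).2 ^ 2
      = (((-c) * x + a) ^ 2 + (-c) ^ 2 * y ^ 2)⁻¹ := by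
  have hD' : ((-c) * x + a) ^ 2 + (-c) ^ 2 * y ^ 2 ≠ 0 := hD.ne'
  simp only [moeb]
  have h1 : c * (((d * x + -b) * ((-c) * x + a) + d * (-c) * y ^ 2) /
      (((-c) * x + a) ^ 2 + (-c) ^ 2 * y ^ 2)) + d
      = (a - c * x) / (((-c) * x + a) ^ 2 + (-c) ^ 2 * y ^ 2) := by
    rw [eq_div_iff hD', add_mul, mul_assoc, div_mul_cancel₀ _ hD']
    linear_combination (a - c * x) * h
  rw [h1, div_pow, div_pow, ← mul_div_assoc, ← add_div, inv_eq_one_div,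
    div_eq_div_iff (by positivity) hD']
  ring

/-- If `γ = (a b; c d) ∈ Γ` with `c ≠ 0`, then `F ⊆ V_{c,d}^≥` and
`γ⁻¹(F) ⊆ V_{c,d}^≤`; consequently `F ∩ γ⁻¹(F) ⊆ V_{c,d}`. -/
theorem F_subset_Vge (k : ℕ) (hk : Squarefree k) (hk1 : 1 < k)
    (e : (R k)ˣ) (he : IsFundUnit k e)
    (g : SL k) (hg : g.1 1 0 ≠ 0) :
    F k (eps k e) ⊆ Vge k (g.1 1 0, g.1 1 1) ∧
    act k g⁻¹ '' F k (eps k e) ⊆ Vle k (g.1 1 0, g.1 1 1) ∧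
    F k (eps k e) ∩ act k g⁻¹ '' F k (eps k e) ⊆ Veq k (g.1 1 0, g.1 1 1) := by
  set a : R k := g.1 0 0 with ha
  set b : R k := g.1 0 1 with hb
  set c : R k := g.1 1 0 with hc
  set d : R k := g.1 1 1 with hd
  -- determinant
  have hdet : a * d - b * c = 1 := by
    have := g.2
    rwa [Matrix.det_fin_two] at this
  have hdetP : ((a : ℝ × ℝ)) * (d : ℝ × ℝ) - (b : ℝ × ℝ) * (c : ℝ × ℝ) = 1 := by
    exact_mod_cast hdet
  have hdet1 : ((a : ℝ × ℝ)).1 * ((d : ℝ × ℝ)).1 - ((b : ℝ × ℝ)).1 * ((c : ℝ × ℝ)).1 = 1 := by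
    have := congrArg Prod.fst hdetP; simpa using this
  have hdet2 : ((a : ℝ × ℝ)).2 * ((d : ℝ × ℝ)).2 - ((b : ℝ × ℝ)).2 * ((c : ℝ × ℝ)).2 = 1 := by
    have := congrArg Prod.snd hdetP; simpa using this
  -- coercions of negations
  have hnegc : ((-c : R k) : ℝ × ℝ) = -((c : R k) : ℝ × ℝ) := by push_cast; ring
  have hnegb : ((-b : R k) : ℝ × ℝ) = -((b : R k) : ℝ × ℝ) := by push_cast; ring
  -- Spairs memberships
  have hS : (c, d) ∈ Spairs k := by
    simp only [Spairs, Set.mem_setOf_eq]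
    rw [Ideal.eq_top_iff_one, Ideal.mem_span_pair]
    exact ⟨-b, a, by linear_combination hdet⟩
  have hS' : ((-c : R k), a) ∈ Spairs k := by
    simp only [Spairs, Set.mem_setOf_eq]
    rw [Ideal.eq_top_iff_one, Ideal.mem_span_pair]
    exact ⟨b, d, by linear_combination hdet⟩
  -- entries of the inverse matrix
  have hinv := Matrix.SpecialLinearGroup.SL2_inv_expl g
  have e00 : (g⁻¹).1 0 0 = d := by rw [hinv]; rfl
  have e01 : (g⁻¹).1 0 1 = -b := by rw [hinv]; rfl
  have e10 : (g⁻¹).1 1 0 = -c := by rw [hinv]; rfl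
  have e11 : (g⁻¹).1 1 1 = a := by rw [hinv]; rfl
  -- Part 1
  have part1 : F k (eps k e) ⊆ Vge k (c, d) := by
    intro p hp
    obtain ⟨-, hpHH, hp0⟩ := hp
    exact ⟨hpHH, hp0 (c, d) hS⟩
  -- Part 2
  have part2 : act k g⁻¹ '' F k (eps k e) ⊆ Vle k (c, d) := by
    rintro p ⟨q, hq, rfl⟩
    obtain ⟨-, hqHH, hq0⟩ := hq
    obtain ⟨hy1q, hy2q⟩ := hqHH
    have hD1 : 0 < ((-((c : ℝ × ℝ)).1) * x1 q + ((a : ℝ × ℝ)).1) ^ 2 +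
        (-((c : ℝ × ℝ)).1) ^ 2 * (y1 q) ^ 2 :=
      D_pos _ ((b : ℝ × ℝ)).1 _ ((d : ℝ × ℝ)).1 (x1 q) (y1 q) hdet1 hy1q
    have hD2 : 0 < ((-((c : ℝ × ℝ)).2) * x2 q + ((a : ℝ × ℝ)).2) ^ 2 +
        (-((c : ℝ × ℝ)).2) ^ 2 * (y2 q) ^ 2 :=
      D_pos _ ((b : ℝ × ℝ)).2 _ ((d : ℝ × ℝ)).2 (x2 q) (y2 q) hdet2 hy2q
    have hact : act k g⁻¹ q =
        ((moeb ((d : ℝ × ℝ)).1 (-((b : ℝ × ℝ)).1) (-((c : ℝ × ℝ)).1) ((a : ℝ × ℝ)).1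
            (x1 q) (y1 q)).1,
         (moeb ((d : ℝ × ℝ)).2 (-((b : ℝ × ℝ)).2) (-((c : ℝ × ℝ)).2) ((a : ℝ × ℝ)).2
            (x2 q) (y2 q)).1,
         (moeb ((d : ℝ × ℝ)).1 (-((b : ℝ × ℝ)).1) (-((c : ℝ × ℝ)).1) ((a : ℝ × ℝ)).1
            (x1 q) (y1 q)).2,
         (moeb ((d : ℝ × ℝ)).2 (-((b : ℝ × ℝ)).2) (-((c : ℝ × ℝ)).2) ((a : ℝ × ℝ)).2
            (x2 q) (y2 q)).2) := by
      simp only [act, e00, e01, e10, e11, hnegc, hnegb, Prod.fst_neg, Prod.snd_neg]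
    have hHH : act k g⁻¹ q ∈ HH := by
      rw [hact]
      constructor
      · show 0 < (moeb ((d : ℝ × ℝ)).1 (-((b : ℝ × ℝ)).1) (-((c : ℝ × ℝ)).1)
            ((a : ℝ × ℝ)).1 (x1 q) (y1 q)).2
        simp only [moeb]
        exact div_pos hy1q hD1
      · show 0 < (moeb ((d : ℝ × ℝ)).2 (-((b : ℝ × ℝ)).2) (-((c : ℝ × ℝ)).2)
            ((a : ℝ × ℝ)).2 (x2 q) (y2 q)).2
        simp only [moeb]
        exact div_pos hy2q hD2
    refine ⟨hHH, ?_⟩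
    have hnorm1 : 1 ≤ HNorm ((-c : R k) : ℝ × ℝ) ((a : R k) : ℝ × ℝ) q :=
      hq0 ((-c : R k), a) hS'
    rw [HNorm, hnegc, Prod.fst_neg, Prod.snd_neg] at hnorm1
    have hcalc : HNorm ((c : R k) : ℝ × ℝ) ((d : R k) : ℝ × ℝ) (act k g⁻¹ q)
        = (((-((c : ℝ × ℝ)).1) * x1 q + ((a : ℝ × ℝ)).1) ^ 2 +
            (-((c : ℝ × ℝ)).1) ^ 2 * (y1 q) ^ 2)⁻¹ *
          (((-((c : ℝ × ℝ)).2) * x2 q + ((a : ℝ × ℝ)).2) ^ 2 +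
            (-((c : ℝ × ℝ)).2) ^ 2 * (y2 q) ^ 2)⁻¹ := by
      rw [hact]
      simp only [HNorm, x1, x2, y1, y2]
      rw [moeb_key _ _ _ _ q.1 q.2.2.1 hdet1 hD1, moeb_key _ _ _ _ q.2.1 q.2.2.2 hdet2 hD2]
    show HNorm ((c : R k) : ℝ × ℝ) ((d : R k) : ℝ × ℝ) (act k g⁻¹ q) ≤ 1
    rw [hcalc, ← mul_inv]
    have hprod : 0 < (((-((c : ℝ × ℝ)).1) * x1 q + ((a : ℝ × ℝ)).1) ^ 2 +
        (-((c : ℝ × ℝ)).1) ^ 2 * (y1 q) ^ 2) *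
        (((-((c : ℝ × ℝ)).2) * x2 q + ((a : ℝ × ℝ)).2) ^ 2 +
        (-((c : ℝ × ℝ)).2) ^ 2 * (y2 q) ^ 2) := mul_pos hD1 hD2
    exact inv_le_one_of_one_le₀ hnorm1
  refine ⟨part1, part2, ?_⟩
  rintro p ⟨hp1, hp2⟩
  exact ⟨(part1 hp1).1, le_antisymm ((part2 hp2).2) ((part1 hp1).2)⟩

end Hilbert
end
end
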